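/- For $\alpha \in (1,2)$, the symbol $p_\alpha(\theta)$ is nonnegative on $[-\pi,\pi]$ and vanishes only at $\theta = 0$, where it has a zero of order exactly $\alpha$: the limit $\lim_{\theta \to 0^+} p_\alpha(\theta)/\theta^\alpha$ exists, is finite, and is strictly positive. -/

import Mathlib

open Real Filter Topology

/-- Real form of the symbol `p_α` on `[-π,π]`. -/
noncomputable def pReal (α θ : ℝ) : ℝ :=
  -2 * (2 * Real.sin (|θ| / 2)) ^ α * Real.cos (α / 2 * (π - |θ|) + |θ|)

lemma cos_arg_neg (α : ℝ) (hα : 1 < α) (hα2 : α < 2) {φ : ℝ} (h0 : 0 ≤ φ) (h1 : φ ≤ π) :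
    Real.cos (α / 2 * (π - φ) + φ) < 0 := by
  apply Real.cos_neg_of_pi_div_two_lt_of_lt
  · nlinarith [Real.pi_pos]
  · nlinarith [Real.pi_pos]

lemma sin_half_nonneg {φ : ℝ} (h0 : 0 ≤ φ) (h1 : φ ≤ π) : 0 ≤ Real.sin (φ / 2) := by
  apply Real.sin_nonneg_of_nonneg_of_le_pi <;> nlinarith [Real.pi_pos]

lemma tendsto_sin_div : Tendsto (fun θ : ℝ => 2 * Real.sin (θ / 2) / θ) (𝓝[>] (0:ℝ)) (𝓝 1) := by
  have hd : HasDerivAt Real.sin 1 0 := by simpa using Real.hasDerivAt_sin 0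
  have h := hasDerivAt_iff_tendsto_slope.mp hd
  have h2 : Tendsto (fun θ : ℝ => θ / 2) (𝓝[>] (0:ℝ)) (𝓝[≠] (0:ℝ)) := by
    rw [tendsto_nhdsWithin_iff]
    constructor
    · simpa using ((continuous_id.div_const 2).tendsto 0).mono_left
        (nhdsWithin_le_nhds (s := Set.Ioi (0:ℝ)))
    · filter_upwards [self_mem_nhdsWithin] with x hx
      simp only [Set.mem_Ioi] at hx
      simp only [Set.mem_compl_iff, Set.mem_singleton_iff]
      positivity
  have h3 := (h.comp h2)
  apply h3.congr'
  filter_upwards [self_mem_nhdsWithin] with θ hθ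
  simp only [Set.mem_Ioi] at hθ
  simp only [Function.comp, slope_def_field, Real.sin_zero]
  field_simp
  ring_nf
  rw [mul_comm θ (Real.sin _), mul_inv_cancel_right₀ hθ.ne']

theorem stmt_6 (α : ℝ) (hα : 1 < α) (hα2 : α < 2) :
    (∀ θ ∈ Set.Icc (-π) π, 0 ≤ pReal α θ) ∧
    (∀ θ ∈ Set.Icc (-π) π, pReal α θ = 0 ↔ θ = 0) ∧
    (∃ L : ℝ, 0 < L ∧
      Tendsto (fun θ : ℝ => pReal α θ / θ ^ α) (nhdsWithin 0 (Set.Ioi 0)) (nhds L)) := by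
  have habs : ∀ θ ∈ Set.Icc (-π) π, 0 ≤ |θ| ∧ |θ| ≤ π := by
    intro θ hθ
    exact ⟨abs_nonneg θ, abs_le.2 ⟨hθ.1, hθ.2⟩⟩
  refine ⟨?_, ?_, ?_⟩
  · intro θ hθ
    obtain ⟨h0, h1⟩ := habs θ hθ
    have hc := cos_arg_neg α hα hα2 h0 h1
    have hs : (0:ℝ) ≤ (2 * Real.sin (|θ| / 2)) ^ α :=
      Real.rpow_nonneg (by linarith [sin_half_nonneg h0 h1]) α
    unfold pReal
    nlinarith
  · intro θ hθ
    obtain ⟨h0, h1⟩ := habs θ hθ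
    have hc := cos_arg_neg α hα hα2 h0 h1
    constructor
    · intro h
      unfold pReal at h
      have hX : (2 * Real.sin (|θ| / 2)) ^ α = 0 := by
        rcases mul_eq_zero.1 h with h' | h'
        · rcases mul_eq_zero.1 h' with h'' | h''
          · norm_num at h''
          · exact h''
        · exact absurd h' (ne_of_lt hc)
      have hs0 : 2 * Real.sin (|θ| / 2) = 0 :=
        (Real.rpow_eq_zero (by linarith [sin_half_nonneg h0 h1]) (by linarith)).1 hX
      have hsin : Real.sin (|θ| / 2) = 0 := by linarith
      by_contra hne
      have hpos : 0 < |θ| := abs_pos.2 hne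
      have : 0 < Real.sin (|θ| / 2) := by
        apply Real.sin_pos_of_pos_of_lt_pi <;> nlinarith [Real.pi_pos]
      linarith
    · intro h
      subst h
      simp [pReal, Real.zero_rpow (by linarith : α ≠ 0)]
  · refine ⟨-2 * Real.cos (α * π / 2), ?_, ?_⟩
    · have : Real.cos (α * π / 2) < 0 := by
        apply Real.cos_neg_of_pi_div_two_lt_of_lt <;> nlinarith [Real.pi_pos]
      linarith
    · have h1 : Tendsto (fun θ : ℝ => (2 * Real.sin (θ / 2) / θ) ^ α) (𝓝[>] (0:ℝ))
          (𝓝 1) := by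
        have := tendsto_sin_div.rpow_const (p := α) (Or.inl one_ne_zero)
        simpa using this
      have h2 : Tendsto (fun θ : ℝ => Real.cos (α / 2 * (π - θ) + θ)) (𝓝[>] (0:ℝ))
          (𝓝 (Real.cos (α * π / 2))) := by
        have hc : Continuous fun θ : ℝ => Real.cos (α / 2 * (π - θ) + θ) := by
          continuity
        have := (hc.tendsto 0).mono_left (nhdsWithin_le_nhds (s := Set.Ioi (0:ℝ)))
        convert this using 2
        ring
      have hlim : Tendsto (fun θ : ℝ =>
          -2 * (2 * Real.sin (θ / 2) / θ) ^ α * Real.cos (α / 2 * (π - θ) + θ))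
          (𝓝[>] (0:ℝ)) (𝓝 (-2 * Real.cos (α * π / 2))) := by
        have := ((h1.const_mul (-2)).mul h2)
        simpa using this
      apply hlim.congr'
      filter_upwards [Ioo_mem_nhdsGT_of_mem (Set.mem_Ico.2 ⟨le_refl (0:ℝ), Real.pi_pos⟩)]
        with θ hθ
      obtain ⟨hθ, hθπ⟩ := hθ
      have habsθ : |θ| = θ := abs_of_pos hθ
      have hs : (0:ℝ) ≤ 2 * Real.sin (θ / 2) := by
        linarith [sin_half_nonneg hθ.le hθπ.le]
      rw [Real.div_rpow hs hθ.le, pReal, habsθ]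
      ring
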